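/- Let R be a canonically ordered tree of order n with vertices labelled in pre-order and weight sequence s_1 s_2 ... s_n. Then the pair (ws(R(v_2)), ws(R - R(v_2))) lies in A_{s_2}(n): both trees are canonically ordered, ws(R(v_2)) = s_2 ... s_{s_2+1}, ws(R - R(v_2)) = (n - s_2) ⊕ s_{s_2+2} ... s_n, and ws(R(v_2)) ≽ (ws(R - R(v_2)))^#. -/

import Mathlib

inductive OTree : Type
  | node : List OTree → OTree

namespace OTree

def size : OTree → ℕ
  | .node cs => (cs.attach.map (fun c => size c.1)).sum + 1
decreasing_by simp only [OTree.node.sizeOf_spec]; have := List.sizeOf_lt_of_mem c.2; omega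

def ws : OTree → List ℕ
  | .node cs => size (.node cs) :: (cs.attach.map (fun c => ws c.1)).flatten
decreasing_by simp only [OTree.node.sizeOf_spec]; have := List.sizeOf_lt_of_mem c.2; omega

def preorder : OTree → List OTree
  | .node cs => .node cs :: (cs.attach.map (fun c => preorder c.1)).flatten
decreasing_by simp only [OTree.node.sizeOf_spec]; have := List.sizeOf_lt_of_mem c.2; omega

lemma size_pos (R : OTree) : 0 < R.size := by
  cases R with | node cs => simp only [OTree.size]; omega

end OTree

inductive RIso : OTree → OTree → Prop
  | node {cs cs' : List OTree} (l : List OTree) (hp : l.Perm cs')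
      (hlen : cs.length = l.length)
      (h : ∀ (i : ℕ) (h1 : i < cs.length) (h2 : i < l.length), RIso cs[i] l[i]) :
      RIso (.node cs) (.node cs')

inductive Canonical : OTree → Prop
  | node {cs : List OTree}
      (hchain : List.Chain' (fun u v => OTree.ws v ≤ OTree.ws u) cs)
      (h : ∀ c ∈ cs, Canonical c) : Canonical (.node cs)

def Centroidal {V : Type} [Fintype V] (G : SimpleGraph V) (u : V) : Prop :=
  ∀ v : ↥{x : V | x ≠ u},
    2 * Nat.card {w : ↥{x : V | x ≠ u} | (G.induce {x : V | x ≠ u}).Reachable v w}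
      ≤ Fintype.card V

def IsParent (w : List ℕ) (i j : ℕ) : Prop :=
  i < j ∧ j < i + w.getD i 0 ∧ ∀ k, i < k → k < j → ¬ (j < k + w.getD k 0)

def graphOf (R : OTree) : SimpleGraph (Fin R.size) :=
  SimpleGraph.fromRel (fun i j => IsParent R.ws i.1 j.1)

def rootIdx (R : OTree) : Fin R.size := ⟨0, R.size_pos⟩

def B (n : ℕ) : Set (List ℕ) := {s | ∃ R : OTree, Canonical R ∧ R.size = n ∧ R.ws = s}

def Succeq (s t : List ℕ) : Prop := t ≤ s ∨ s <+: t

def A (q n : ℕ) : Set (List ℕ × List ℕ) :=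
  {p | p.1 ∈ B q ∧ p.2 ∈ B (n - q) ∧ Succeq p.1 p.2.tail}

def FwsUni {V : Type} [Fintype V] (G : SimpleGraph V) (s : List ℕ) : Prop :=
  ∃ R : OTree, Canonical R ∧ R.ws = s ∧
    ∃ f : graphOf R ≃g G, Centroidal G (f (rootIdx R))

def FwsBi {V : Type} [Fintype V] (G : SimpleGraph V) (s : List ℕ) : Prop :=
  ∃ u v, u ≠ v ∧ G.Adj u v ∧ Centroidal G u ∧ Centroidal G v ∧
  ∃ A B : OTree, Canonical A ∧ Canonical B ∧ B.ws ≤ A.ws ∧ s = A.ws ++ B.ws ∧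
  ∃ (fA : graphOf A ≃g (G.deleteEdges {s(u,v)}).induce
        {x | (G.deleteEdges {s(u,v)}).Reachable u x})
    (fB : graphOf B ≃g (G.deleteEdges {s(u,v)}).induce
        {x | (G.deleteEdges {s(u,v)}).Reachable v x}),
    (fA (rootIdx A)).1 = u ∧ (fB (rootIdx B)).1 = v

namespace OTree

lemma ws_node (cs : List OTree) : ws (.node cs) = size (.node cs) :: (cs.map ws).flatten := by
  rw [ws, List.attach_map_val]

lemma size_node (cs : List OTree) : size (.node cs) = (cs.map size).sum + 1 := by
  rw [size, List.attach_map_val]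

lemma ws_length : ∀ R : OTree, R.ws.length = R.size
  | .node cs => by
    rw [ws_node, size_node]
    simp only [List.length_cons, List.length_flatten, List.map_map, Function.comp_def]
    congr 2
    exact List.map_congr_left (fun c hc => ws_length c)
decreasing_by simp only [OTree.node.sizeOf_spec]; have := List.sizeOf_lt_of_mem hc; omega

lemma ws_eq_cons (R : OTree) : ∃ t, R.ws = R.size :: t := by
  cases R with | node cs => exact ⟨_, ws_node cs⟩

end OTree

lemma lex_append {a b : List ℕ} (z : List ℕ) (h : List.Lex (·<·) a b) (hnp : ¬ a <+: b) :
    List.Lex (·<·) (a ++ z) b := by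
  induction h with
  | nil => exact absurd (List.nil_prefix) hnp
  | @cons x s t h ih => exact List.Lex.cons (ih (fun hp => hnp (by simpa using hp)))
  | rel h => exact List.Lex.rel h

theorem stmt15 (c : OTree) (cs : List OTree)
    (hC : Canonical (OTree.node (c :: cs))) :
    Canonical c ∧ Canonical (OTree.node cs) ∧
    c.ws = ((OTree.node (c :: cs)).ws.drop 1).take c.size ∧
    (OTree.node cs).ws =
      ((OTree.node (c :: cs)).size - c.size) ::
        (OTree.node (c :: cs)).ws.drop (c.size + 1) ∧
    Succeq c.ws (OTree.node cs).ws.tail ∧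
    (c.ws, (OTree.node cs).ws) ∈ A c.size (OTree.node (c :: cs)).size := by
  cases hC with
  | node hchain hcan =>
  have hc : Canonical c := hcan c (by simp)
  have hcs : Canonical (OTree.node cs) :=
    Canonical.node hchain.tail (fun x hx => hcan x (List.mem_cons_of_mem _ hx))
  have hsz : (OTree.node (c :: cs)).size = c.size + (OTree.node cs).size := by
    rw [OTree.size_node, OTree.size_node]; simp; ring
  have hw1 : (OTree.node (c :: cs)).ws =
      (OTree.node (c :: cs)).size :: (c.ws ++ (cs.map OTree.ws).flatten) := by
    rw [OTree.ws_node]; simp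
  have hw2 : (OTree.node cs).ws = (OTree.node cs).size :: (cs.map OTree.ws).flatten :=
    OTree.ws_node cs
  have hlen := OTree.ws_length c
  have htake : c.ws = ((OTree.node (c :: cs)).ws.drop 1).take c.size := by
    rw [hw1]; simp [List.take_left' hlen]
  have hdrop : (OTree.node cs).ws =
      ((OTree.node (c :: cs)).size - c.size) :: (OTree.node (c :: cs)).ws.drop (c.size + 1) := by
    rw [hw1, hw2]
    congr 1
    · omega
    · rw [List.drop_succ_cons, List.drop_left' hlen]
  have hsucc : Succeq c.ws (OTree.node cs).ws.tail := by
    rw [hw2]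
    cases cs with
    | nil => exact Or.inl (by simp; obtain ⟨t, ht⟩ := c.ws_eq_cons; rw [ht]; exact le_of_lt List.Lex.nil)
    | cons c' cs' =>
      have hle : c'.ws ≤ c.ws := (List.isChain_cons_cons.mp hchain).1
      simp only [List.map_cons, List.flatten_cons, List.tail_cons]
      rcases lt_or_eq_of_le hle with hlt | heq
      · left
        apply le_of_lt
        refine lex_append _ hlt ?_
        intro hp
        have h1 : c'.ws.length = c.ws.length := by
          rw [OTree.ws_length, OTree.ws_length]
          obtain ⟨t', ht'⟩ := c'.ws_eq_cons
          obtain ⟨t, ht⟩ := c.ws_eq_cons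
          rw [ht, ht'] at hp
          exact (List.cons_prefix_cons.mp hp).1
        exact absurd (hp.eq_of_length h1) (ne_of_lt hlt)
      · right
        rw [heq]
        exact List.prefix_append _ _
  refine ⟨hc, hcs, htake, hdrop, hsucc, ⟨c, hc, rfl, rfl⟩, ⟨OTree.node cs, hcs, by omega, rfl⟩, hsucc⟩
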